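/- For the weight W_μ(n;x) = (√(1-|x|²)+1/n)^{2μ} on the unit ball and the metric d(x,y) = arccos(⟨x,y⟩ + √(1-|x|²)√(1-|y|²)), for all x, y in B^d: W_μ(n;x)/W_μ(n;y) ≤ 2^μ (1 + n·d(x,y))^{2μ}. -/

import Mathlib

/-- The metric `d(x,y) = arccos(⟨x,y⟩ + √(1-|x|²)√(1-|y|²))` on the unit ball. -/
noncomputable def ballMetric {d : ℕ} (x y : EuclideanSpace ℝ (Fin d)) : ℝ :=
  Real.arccos ((inner ℝ x y : ℝ) + Real.sqrt (1 - ‖x‖ ^ 2) * Real.sqrt (1 - ‖y‖ ^ 2))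

/-- The weight `W_μ(n;x) = (√(1-|x|²) + 1/n)^{2μ}`. -/
noncomputable def Wmu {d : ℕ} (μ : ℝ) (n : ℕ) (x : EuclideanSpace ℝ (Fin d)) : ℝ :=
  (Real.sqrt (1 - ‖x‖ ^ 2) + 1 / n) ^ (2 * μ)

/-- `W_μ(n;x)/W_μ(n;y) ≤ 2^μ (1 + n d(x,y))^{2μ}` for `x, y` in the ball. -/
theorem stmt_2 (d : ℕ) (μ : ℝ) (hμ : 0 ≤ μ) (n : ℕ) (hn : 0 < n)
    (x y : EuclideanSpace ℝ (Fin d)) (hx : ‖x‖ ≤ 1) (hy : ‖y‖ ≤ 1) :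
    Wmu μ n x / Wmu μ n y ≤ (2 : ℝ) ^ μ * (1 + n * ballMetric x y) ^ (2 * μ) := by
  obtain ⟨a, ha⟩ : ∃ t, t = Real.sqrt (1 - ‖x‖ ^ 2) := ⟨_, rfl⟩
  obtain ⟨b, hb⟩ : ∃ t, t = Real.sqrt (1 - ‖y‖ ^ 2) := ⟨_, rfl⟩
  obtain ⟨p, hp⟩ : ∃ t, t = ‖x‖ := ⟨_, rfl⟩
  obtain ⟨q, hq⟩ : ∃ t, t = ‖y‖ := ⟨_, rfl⟩
  obtain ⟨i, hi⟩ : ∃ t, t = (inner ℝ x y : ℝ) := ⟨_, rfl⟩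
  obtain ⟨θ, hθdef⟩ : ∃ t, t = ballMetric x y := ⟨_, rfl⟩
  have hp0 : 0 ≤ p := hp ▸ norm_nonneg x
  have hq0 : 0 ≤ q := hq ▸ norm_nonneg y
  have hp1 : p ≤ 1 := hp ▸ hx
  have hq1 : q ≤ 1 := hq ▸ hy
  have hx2 : (0:ℝ) ≤ 1 - p ^ 2 := by nlinarith
  have hy2 : (0:ℝ) ≤ 1 - q ^ 2 := by nlinarith
  have ha2 : a ^ 2 = 1 - p ^ 2 := by rw [ha, hp]; exact Real.sq_sqrt (hp ▸ hx2)
  have hb2 : b ^ 2 = 1 - q ^ 2 := by rw [hb, hq]; exact Real.sq_sqrt (hq ▸ hy2)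
  have ha0 : 0 ≤ a := ha ▸ Real.sqrt_nonneg _
  have hb0 : 0 ≤ b := hb ▸ Real.sqrt_nonneg _
  have hcs : |i| ≤ p * q := by rw [hi, hp, hq]; exact abs_real_inner_le_norm x y
  have hcs1 : i ≤ p * q := (abs_le.mp hcs).2
  have hcs2 : -(p * q) ≤ i := (abs_le.mp hcs).1
  have hc1 : i + a * b ≤ 1 := by nlinarith [sq_nonneg (p - q), sq_nonneg (a - b)]
  have hcm1 : -1 ≤ i + a * b := by nlinarith [sq_nonneg (p + q), sq_nonneg (a + b)]
  have hθ : θ = Real.arccos (i + a * b) := by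
    rw [hθdef, ballMetric, ← ha, ← hb, ← hi]
  have hθc : Real.cos θ = i + a * b := by rw [hθ]; exact Real.cos_arccos hcm1 hc1
  have hθ0 : 0 ≤ θ := hθ ▸ Real.arccos_nonneg _
  have hcos : 1 - θ ^ 2 / 2 ≤ Real.cos θ := Real.one_sub_sq_div_two_le_cos
  have hc' : 1 - θ ^ 2 / 2 ≤ i + a * b := hθc ▸ hcos
  have hi2 : 2 * i ≤ p ^ 2 + q ^ 2 := by
    have h := two_mul_le_add_sq p q
    linarith
  have he : (a - b) ^ 2 = (1 - p ^ 2) + (1 - q ^ 2) - 2 * (a * b) := by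
    linear_combination ha2 + hb2
  have hsq : (a - b) ^ 2 ≤ θ ^ 2 := by linarith
  have hab : a - b ≤ θ := by
    have h := Real.sqrt_le_sqrt hsq
    rw [Real.sqrt_sq_eq_abs, Real.sqrt_sq hθ0] at h
    exact le_trans (le_abs_self _) h
  have hnpos : (0:ℝ) < (n:ℝ) := by exact_mod_cast hn
  have hinv : (0:ℝ) < 1 / (n:ℝ) := one_div_pos.mpr hnpos
  have hBpos : (0:ℝ) < b + 1 / n := by linarith
  have hApos : (0:ℝ) < a + 1 / n := by linarith
  have hkey : a + 1 / n ≤ (b + 1 / n) * (1 + n * θ) := by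
    have h0 : 0 ≤ (n:ℝ) * θ * b := by positivity
    have heq : ((n:ℝ)) * θ * (b + 1 / n) = n * θ * b + θ := by
      field_simp
    have hexp : (b + 1 / (n:ℝ)) * (1 + n * θ) = b + 1 / n + n * θ * (b + 1 / n) := by ring
    linarith
  have h1θ : (0:ℝ) ≤ 1 + n * θ := by
    have : 0 ≤ (n:ℝ) * θ := by positivity
    linarith
  have hrpow : (a + 1/n) ^ (2*μ) ≤ (b + 1/n) ^ (2*μ) * (1 + n * θ) ^ (2*μ) := by
    calc (a + 1/n) ^ (2*μ) ≤ ((b + 1/n) * (1 + n * θ)) ^ (2*μ) :=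
          Real.rpow_le_rpow (le_of_lt hApos) hkey (by linarith)
      _ = (b + 1/n) ^ (2*μ) * (1 + n * θ) ^ (2*μ) :=
          Real.mul_rpow (le_of_lt hBpos) h1θ
  have hWx : Wmu μ n x = (a + 1/n) ^ (2*μ) := by rw [Wmu, ← ha]
  have hWy : Wmu μ n y = (b + 1/n) ^ (2*μ) := by rw [Wmu, ← hb]
  have hdiv : Wmu μ n x / Wmu μ n y ≤ (1 + n * θ) ^ (2*μ) := by
    rw [hWx, hWy, div_le_iff₀ (Real.rpow_pos_of_pos hBpos _)]
    calc (a + 1/(n:ℝ)) ^ (2*μ) ≤ (b + 1/n) ^ (2*μ) * (1 + n * θ) ^ (2*μ) := hrpow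
      _ = (1 + n * θ) ^ (2*μ) * (b + 1/n) ^ (2*μ) := by ring
  have h2 : (1:ℝ) ≤ (2:ℝ) ^ μ := by
    have := Real.rpow_le_rpow_of_exponent_le (by norm_num : (1:ℝ) ≤ 2) hμ
    simpa using this
  have hpos : (0:ℝ) ≤ (1 + n * θ) ^ (2*μ) := Real.rpow_nonneg h1θ _
  rw [← hθdef]
  exact hdiv.trans (le_mul_of_one_le_left hpos h2)
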